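/- Let ε > 0, let ν be a nonnegative Borel measure on ℝ with ν({0}) = 0, ν(ℝ \ [−ε, ε]) = 0 and ∫ x² dν(x) < ∞, let b ≤ 0 be a real number, and let u ∈ ℝ satisfy b + ∫ (e^{ux} − 1) x dν(x) = 0. Define Λ(u) := b·u + ∫ (e^{ux} − 1 − ux) dν(x). Then u² · ∫_{(0,∞)} x² dν(x) ≤ −2 Λ(u). -/

import Mathlib

open MeasureTheory Real Set

lemma aux1' (t : ℝ) : Real.exp t - 1 ≤ t * Real.exp t := by
  have h : Real.exp (-t) * Real.exp t = 1 := by rw [← Real.exp_add]; simp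
  nlinarith [Real.add_one_le_exp (-t), Real.exp_pos t]

lemma aux2' (t : ℝ) : |Real.exp t - 1| ≤ |t| * Real.exp |t| := by
  rcases le_or_gt 0 t with h | h
  · rw [abs_of_nonneg (by nlinarith [Real.add_one_le_exp t] : (0:ℝ) ≤ Real.exp t - 1),
      abs_of_nonneg h]
    exact aux1' t
  · rw [abs_of_nonpos (by nlinarith [Real.exp_le_one_iff.mpr h.le] : Real.exp t - 1 ≤ 0),
      abs_of_neg h]
    have h1 := mul_nonneg (neg_nonneg.mpr h.le)
      (sub_nonneg.mpr (Real.one_le_exp (neg_nonneg.mpr h.le)))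
    nlinarith [Real.add_one_le_exp t]

lemma aux4' (t : ℝ) : Real.exp t - 1 - t ≤ t ^ 2 * Real.exp |t| := by
  have h1 : Real.exp t - 1 - t ≤ t * (Real.exp t - 1) := by nlinarith [aux1' t]
  have h2 : t * (Real.exp t - 1) ≤ |t| * |Real.exp t - 1| := by
    rw [← abs_mul]; exact le_abs_self _
  have h3 := aux2' t
  have := sq_abs t
  nlinarith [abs_nonneg t, Real.exp_pos |t|]

lemma keynn' (t : ℝ) : 0 ≤ 2 * (t * (Real.exp t - 1) - (Real.exp t - 1 - t)) := by
  have h : Real.exp (-t) * Real.exp t = 1 := by rw [← Real.exp_add]; simp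
  nlinarith [Real.add_one_le_exp (-t), Real.exp_pos t]

lemma keysq' (t : ℝ) (ht : 0 ≤ t) :
    t ^ 2 ≤ 2 * (t * (Real.exp t - 1) - (Real.exp t - 1 - t)) := by
  set F : ℝ → ℝ := fun s => 2 * (s * (Real.exp s - 1) - (Real.exp s - 1 - s)) - s ^ 2 with hF
  have hder : ∀ s : ℝ, HasDerivAt F (2 * s * (Real.exp s - 1)) s := by
    intro s
    have he := Real.hasDerivAt_exp s
    have hmul : HasDerivAt (fun s : ℝ => s * (Real.exp s - 1))
        (1 * (Real.exp s - 1) + s * Real.exp s) s :=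
      (hasDerivAt_id s).mul (by simpa using he.sub_const 1)
    have h2 : HasDerivAt (fun s : ℝ => Real.exp s - 1 - s) (Real.exp s - 1) s := by
      exact (he.sub_const 1).sub (hasDerivAt_id' s)
    have h3 : HasDerivAt (fun s : ℝ => s ^ 2) (2 * s) s := by
      simpa [mul_comm] using hasDerivAt_pow 2 s
    have h1 := ((hmul.sub h2).const_mul 2).sub h3
    exact h1.congr_deriv (by ring)
  have hmono : MonotoneOn F (Set.Ici (0:ℝ)) := by
    apply monotoneOn_of_deriv_nonneg (convex_Ici 0)
    · exact (HasDerivAt.continuousOn (fun x _ => hder x))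
    · intro x hx
      exact (hder x).differentiableAt.differentiableWithinAt
    · intro x hx
      rw [(hder x).deriv, interior_Ici] at *
      have hx0 : (0:ℝ) < x := hx
      have : (1:ℝ) ≤ Real.exp x := Real.one_le_exp hx0.le
      nlinarith
  have h0 : F 0 ≤ F t := hmono (le_refl (0:ℝ)) ht ht
  simp only [hF] at h0
  norm_num at h0
  nlinarith [h0]

/-- Lemma A.1(a) of the paper, in multiplied-out form: if `ν` is a Lévy measure supported in
`[−ε, ε]` with finite second moment, `b ≤ 0`, and `u` solves `b + ∫ (e^{ux} − 1)x dν = 0`,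
then with `Λ(u) = bu + ∫ (e^{ux} − 1 − ux) dν` one has `u² ∫_{(0,∞)} x² dν ≤ −2Λ(u)`. -/
theorem stmt_10 (ε : ℝ) (hε : 0 < ε) (ν : Measure ℝ) (hν0 : ν {0} = 0)
    (hsupp : ν (Icc (-ε) ε)ᶜ = 0)
    (hmom : ∫⁻ x, ENNReal.ofReal (x ^ 2) ∂ν < ⊤)
    (b : ℝ) (hb : b ≤ 0) (u : ℝ)
    (hu : b + ∫ x, (Real.exp (u * x) - 1) * x ∂ν = 0) :
    u ^ 2 * ∫ x in Ioi (0 : ℝ), x ^ 2 ∂ν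
      ≤ -(2 * (b * u + ∫ x, (Real.exp (u * x) - 1 - u * x) ∂ν)) := by
  have hae : ∀ᵐ x ∂ν, x ∈ Icc (-ε) ε := by
    rw [ae_iff]
    exact hsupp
  have hx2 : Integrable (fun x : ℝ => x ^ 2) ν := by
    refine ⟨(measurable_id.pow_const 2).aestronglyMeasurable, ?_⟩
    rw [hasFiniteIntegral_iff_ofReal (ae_of_all _ fun x => sq_nonneg x)]
    exact hmom
  have hexb : ∀ x ∈ Icc (-ε) ε, Real.exp |u * x| ≤ Real.exp (|u| * ε) := by
    intro x hx
    apply Real.exp_le_exp.mpr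
    rw [abs_mul]
    exact mul_le_mul_of_nonneg_left (abs_le.mpr ⟨hx.1, hx.2⟩) (abs_nonneg u)
  have hif1 : Integrable (fun x => (Real.exp (u * x) - 1) * x) ν := by
    apply Integrable.mono' (hx2.const_mul (|u| * Real.exp (|u| * ε)))
    · apply Measurable.aestronglyMeasurable
      fun_prop
    · filter_upwards [hae] with x hx
      have h3 := hexb x hx
      calc ‖(Real.exp (u * x) - 1) * x‖ = |Real.exp (u * x) - 1| * |x| := by
            rw [norm_eq_abs, abs_mul]
        _ ≤ (|u * x| * Real.exp |u * x|) * |x| :=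
            mul_le_mul_of_nonneg_right (aux2' _) (abs_nonneg x)
        _ = |u| * x ^ 2 * Real.exp |u * x| := by
            rw [abs_mul, ← sq_abs x]; ring
        _ ≤ |u| * x ^ 2 * Real.exp (|u| * ε) :=
            mul_le_mul_of_nonneg_left h3 (by positivity)
        _ = |u| * Real.exp (|u| * ε) * x ^ 2 := by ring
  have hif2 : Integrable (fun x => Real.exp (u * x) - 1 - u * x) ν := by
    apply Integrable.mono' (hx2.const_mul (u ^ 2 * Real.exp (|u| * ε)))
    · apply Measurable.aestronglyMeasurable
      fun_prop
    · filter_upwards [hae] with x hx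
      have h2 := aux4' (u * x)
      have h3 := hexb x hx
      have h0 := Real.add_one_le_exp (u * x)
      rw [norm_eq_abs, abs_of_nonneg (by linarith : (0:ℝ) ≤ Real.exp (u*x) - 1 - u*x)]
      have hsq : (u * x) ^ 2 = u ^ 2 * x ^ 2 := by ring
      nlinarith [Real.exp_pos |u * x|, sq_nonneg x, sq_nonneg u]
  set J1 := ∫ x, (Real.exp (u * x) - 1) * x ∂ν with hJ1def
  set J2 := ∫ x, (Real.exp (u * x) - 1 - u * x) ∂ν with hJ2def
  have hbJ : b = -J1 := by linarith
  rcases le_or_gt 0 u with hu0 | hu0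
  · have hptw : ∀ x : ℝ, Set.indicator (Ioi (0:ℝ)) (fun x => u ^ 2 * x ^ 2) x
        ≤ 2 * u * ((Real.exp (u * x) - 1) * x) - 2 * (Real.exp (u * x) - 1 - u * x) := by
      intro x
      have key := keynn' (u * x)
      by_cases hx : x ∈ Ioi (0:ℝ)
      · rw [Set.indicator_of_mem hx]
        have hxx := keysq' (u * x) (mul_nonneg hu0 (le_of_lt hx))
        nlinarith [hxx]
      · rw [Set.indicator_of_notMem hx]
        nlinarith [key]
    have hInt1 : Integrable (fun x => Set.indicator (Ioi (0:ℝ)) (fun x => u ^ 2 * x ^ 2) x) ν :=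
      (hx2.const_mul (u ^ 2)).indicator measurableSet_Ioi
    have hInt2 : Integrable
        (fun x => 2 * u * ((Real.exp (u * x) - 1) * x) - 2 * (Real.exp (u * x) - 1 - u * x)) ν :=
      (hif1.const_mul (2 * u)).sub (hif2.const_mul 2)
    have hle := integral_mono hInt1 hInt2 hptw
    rw [integral_indicator measurableSet_Ioi] at hle
    rw [integral_sub (hif1.const_mul (2 * u)) (hif2.const_mul 2),
      integral_const_mul, integral_const_mul, integral_const_mul] at hle
    rw [← hJ1def, ← hJ2def] at hle
    rw [hbJ]
    nlinarith [hle]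
  · have hneg : ∀ x : ℝ, (Real.exp (u * x) - 1) * x ≤ 0 := by
      intro x
      rcases lt_trichotomy x 0 with hx | hx | hx
      · have hux : 0 < u * x := mul_pos_of_neg_of_neg hu0 hx
        have := Real.one_le_exp hux.le
        nlinarith
      · simp [hx]
      · have hux : u * x < 0 := mul_neg_of_neg_of_pos hu0 hx
        have := Real.exp_le_one_iff.mpr hux.le
        nlinarith
    have hint_nonpos : J1 ≤ 0 := integral_nonpos fun x => hneg x
    have hbz : b = 0 := le_antisymm hb (by linarith)
    have hJ1z : J1 = 0 := by linarith
    have hae0 : ∀ᵐ x ∂ν, -((Real.exp (u * x) - 1) * x) = 0 := by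
      have h := (integral_eq_zero_iff_of_nonneg
        (fun x => neg_nonneg.mpr (hneg x)) hif1.neg)
      have hz : ∫ x, -((Real.exp (u * x) - 1) * x) ∂ν = 0 := by
        rw [integral_neg, ← hJ1def, hJ1z, neg_zero]
      exact h.mp hz
    have haex : ∀ᵐ x ∂ν, x = 0 := by
      filter_upwards [hae0] with x hx
      by_contra hxne
      have hx0 : (Real.exp (u * x) - 1) * x = 0 := by linarith
      rcases mul_eq_zero.mp hx0 with h | h
      · rcases lt_or_gt_of_ne hxne with hx' | hx'
        · have hux : 0 < u * x := mul_pos_of_neg_of_neg hu0 hx'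
          have := Real.exp_lt_exp.mpr hux
          rw [Real.exp_zero] at this
          linarith
        · have hux : u * x < 0 := mul_neg_of_neg_of_pos hu0 hx'
          have := Real.exp_lt_exp.mpr hux
          rw [Real.exp_zero] at this
          linarith
      · exact hxne h
    have hcompl : ν ({0}ᶜ : Set ℝ) = 0 := by
      rw [ae_iff] at haex
      exact haex
    have hIoi : ν (Ioi (0:ℝ)) = 0 :=
      measure_mono_null (fun x hx => ne_of_gt hx) hcompl
    have hI : ∫ x in Ioi (0:ℝ), x ^ 2 ∂ν = 0 := by
      rw [Measure.restrict_eq_zero.mpr hIoi, integral_zero_measure]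
    have hJ2z : J2 = 0 := by
      rw [hJ2def]
      apply integral_eq_zero_of_ae
      filter_upwards [haex] with x hx
      simp [hx]
    rw [hI, hJ2z, hbz]
    norm_num
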